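/- Let $R \in \mathrm{Igr}_+$. Then the colimit ring $\mathbb{A}(R) = \varinjlim_n R_n$ (with transition maps $h_n = \top_1 *_{1n} (-)$ and multiplication induced by the $*_{nm}$) is a boolean ring, i.e., every element satisfies $x^2 = x$. -/

import Mathlib

namespace IgrPaper

/-- Data of an inductive graded ring: a family of carriers, additions, pointed
elements `⊤ₙ` and zero, and graded multiplications. -/
structure IgrData : Type 1 where
  C : ℕ → Type
  add : ∀ {n}, C n → C n → C n
  zero : ∀ n, C n
  top : ∀ n, C n
  mul : ∀ {n m}, C n → C m → C (n + m)

namespace IgrData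

/-- The transition map `hₙ = ⊤₁ *₁ₙ (-) : Rₙ → Rₙ₊₁`. -/
def h (R : IgrData) {n : ℕ} (x : R.C n) : R.C (n + 1) :=
  cast (congrArg R.C (Nat.add_comm 1 n)) (R.mul (R.top 1) x)

/-- The axioms of an inductive graded ring. -/
structure IsIgr (R : IgrData) : Prop where
  add_assoc : ∀ {n} (x y z : R.C n), R.add (R.add x y) z = R.add x (R.add y z)
  add_comm : ∀ {n} (x y : R.C n), R.add x y = R.add y x
  add_zero : ∀ {n} (x : R.C n), R.add x (R.zero n) = x
  add_self : ∀ {n} (x : R.C n), R.add x x = R.zero n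
  zero_ne_top : R.zero 0 ≠ R.top 0
  level0 : ∀ x : R.C 0, x = R.zero 0 ∨ x = R.top 0
  mul_add : ∀ {n m} (x : R.C n) (y z : R.C m),
    R.mul x (R.add y z) = R.add (R.mul x y) (R.mul x z)
  add_mul : ∀ {n m} (x y : R.C n) (z : R.C m),
    R.mul (R.add x y) z = R.add (R.mul x z) (R.mul y z)
  mul_assoc : ∀ {n m p} (x : R.C n) (y : R.C m) (z : R.C p),
    HEq (R.mul (R.mul x y) z) (R.mul x (R.mul y z))
  mul_comm : ∀ {n m} (x : R.C n) (y : R.C m), HEq (R.mul x y) (R.mul y x)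
  mul_top0 : ∀ {n} (x : R.C n), R.mul x (R.top 0) = x
  top_mul_top : ∀ n m, R.mul (R.top n) (R.top m) = R.top (n + m)
  h_top : ∀ n, R.h (R.top n) = R.top (n + 1)
  h_compat : ∀ {n m} (x : R.C n) (y : R.C m),
    HEq (R.mul (R.h x) (R.h y)) (R.h (R.h (R.mul x y)))

/-- Morphism of inductive graded rings: a levelwise family of pointed group
homomorphisms whose direct sum is a unital ring homomorphism. -/
structure IsIgrHom (R S : IgrData) (f : ∀ n, R.C n → S.C n) : Prop where
  map_add : ∀ (n : ℕ) (x y : R.C n), f n (R.add x y) = S.add (f n x) (f n y)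
  map_zero : ∀ n, f n (R.zero n) = S.zero n
  map_top : ∀ n, f n (R.top n) = S.top n
  map_mul : ∀ (n m : ℕ) (x : R.C n) (y : R.C m),
    f (n + m) (R.mul x y) = S.mul (f n x) (f m y)

/-- Iterated transition map `Rₙ → Rₙ₊ₖ`. -/
def hIter (R : IgrData) : ∀ (k : ℕ) {n : ℕ}, R.C n → R.C (n + k)
  | 0, _, x => x
  | k+1, _, x => R.h (R.hIter k x)

/-- Pure products of `n` elements of level 1. -/
inductive Pure1 (R : IgrData) : ∀ n, R.C n → Prop
  | base (a : R.C 1) : Pure1 R 1 a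
  | step {n : ℕ} (x : R.C n) (a : R.C 1) : Pure1 R n x → Pure1 R (n + 1) (R.mul x a)

/-- Elements additively generated by pure products of level-1 elements. -/
inductive Gen1 (R : IgrData) : ∀ n, R.C n → Prop
  | pure {n : ℕ} (x : R.C n) : Pure1 R n x → Gen1 R n x
  | zero (n : ℕ) : Gen1 R n (R.zero n)
  | add {n : ℕ} (x y : R.C n) : Gen1 R n x → Gen1 R n y → Gen1 R n (R.add x y)

/-- `R` is generated at level 1 (the condition defining `Igr₁`). -/
def GeneratedAt1 (R : IgrData) : Prop := ∀ n, 1 ≤ n → ∀ x : R.C n, Gen1 R n x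

/-- The "hyperbolic" condition defining `Igr_h`: `a *₁₁ a = ⊤₁ *₁₁ a`. -/
def HCond (R : IgrData) : Prop := ∀ a : R.C 1, R.mul a a = R.mul (R.top 1) a

/-- Membership in `Igr₊ = Igr₁ ∩ Igr_h`. -/
def IgrPlus (R : IgrData) : Prop := GeneratedAt1 R ∧ HCond R

/-- Marshall-type condition: all transition maps are injective. -/
def MC (R : IgrData) : Prop := ∀ n, Function.Injective fun x : R.C n => R.h x

end IgrData
end IgrPaper
namespace IgrPaper
namespace IgrData

/-- One-step relation generating the colimit of the system `(Rₙ, hₙ)`. -/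
def colimRel (R : IgrData) : (Σ n, R.C n) → (Σ n, R.C n) → Prop :=
  fun p q => q = ⟨p.1 + 1, R.h p.2⟩

/-- The colimit `𝔸(R) = colimₙ Rₙ`. -/
def Colim (R : IgrData) : Type := Quot (colimRel R)

/-- The canonical cocone map `Rₙ → 𝔸(R)`. -/
def cmk (R : IgrData) {n : ℕ} (x : R.C n) : Colim R := Quot.mk _ ⟨n, x⟩

/-- Multiplication on the colimit ring `𝔸(R)`. -/
noncomputable def cmul (R : IgrData) (a b : Colim R) : Colim R :=
  Quot.mk _ ⟨a.out.1 + b.out.1, R.mul a.out.2 b.out.2⟩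

/-- Addition on the colimit ring `𝔸(R)`. -/
noncomputable def cadd (R : IgrData) (a b : Colim R) : Colim R :=
  Quot.mk _ ⟨a.out.1 + b.out.1,
    R.add (R.hIter b.out.1 a.out.2)
      (cast (congrArg R.C (Nat.add_comm b.out.1 a.out.1)) (R.hIter a.out.1 b.out.2))⟩

/-- The levels of the trivial inductive graded ring `𝕋(B)`. -/
abbrev TC (B : Type) : ℕ → Type
  | 0 => ZMod 2
  | _+1 => B

/-- The trivial inductive graded ring `𝕋(B)` on a commutative ring `B`:
`𝔽₂` at level 0 and `B` at all higher levels, with identity transitions. -/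
def TData (B : Type) [CommRing B] : IgrData where
  C := TC B
  add := fun {n} => match n with
    | 0 => fun x y => ((x : ZMod 2) + (y : ZMod 2) : ZMod 2)
    | _+1 => fun x y => ((x : B) + (y : B) : B)
  zero := fun n => match n with
    | 0 => ((0 : ZMod 2) : TC B 0)
    | k+1 => ((0 : B) : TC B (k+1))
  top := fun n => match n with
    | 0 => ((1 : ZMod 2) : TC B 0)
    | k+1 => ((1 : B) : TC B (k+1))
  mul := fun {n m} => match n, m with
    | 0, 0 => fun x y => ((x : ZMod 2) * (y : ZMod 2) : ZMod 2)
    | 0, _+1 => fun x b => (if (x : ZMod 2) = 1 then (b : B) else (0 : B) : B)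
    | _+1, 0 => fun b x => (if (x : ZMod 2) = 1 then (b : B) else (0 : B) : B)
    | _+1, _+1 => fun a b => ((a : B) * (b : B) : B)

/-- The levels of `𝕋(𝔸(R))`. -/
abbrev TCc (R : IgrData) : ℕ → Type
  | 0 => ZMod 2
  | _+1 => Colim R

/-- The inductive graded ring `𝕋(𝔸(R))`. -/
noncomputable def TColim (R : IgrData) : IgrData where
  C := TCc R
  add := fun {n} => match n with
    | 0 => fun x y => ((x : ZMod 2) + (y : ZMod 2) : ZMod 2)
    | _+1 => fun x y => (R.cadd x y : Colim R)
  zero := fun n => match n with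
    | 0 => ((0 : ZMod 2) : TCc R 0)
    | k+1 => (R.cmk (R.zero 0) : TCc R (k+1))
  top := fun n => match n with
    | 0 => ((1 : ZMod 2) : TCc R 0)
    | k+1 => (R.cmk (R.top 0) : TCc R (k+1))
  mul := fun {n m} => match n, m with
    | 0, 0 => fun x y => ((x : ZMod 2) * (y : ZMod 2) : ZMod 2)
    | 0, _+1 => fun x q => (if (x : ZMod 2) = 1 then (q : Colim R) else R.cmk (R.zero 0) : Colim R)
    | _+1, 0 => fun q x => (if (x : ZMod 2) = 1 then (q : Colim R) else R.cmk (R.zero 0) : Colim R)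
    | _+1, _+1 => fun p q => (R.cmul p q : Colim R)

open Classical in
/-- The canonical (unit) morphism `η_R : R → 𝕋(𝔸(R))`. -/
noncomputable def eta (R : IgrData) : ∀ n, R.C n → (TColim R).C n
  | 0 => fun x => (if x = R.top 0 then (1 : ZMod 2) else (0 : ZMod 2) : ZMod 2)
  | _+1 => fun x => (R.cmk x : Colim R)

/-- The functor `𝕋` on morphisms. -/
def Tmap {A B : Type} [CommRing A] [CommRing B] (g : A →+* B) :
    ∀ n, (TData A).C n → (TData B).C n
  | 0 => fun x => (x : ZMod 2)
  | _+1 => fun a => (g (a : A) : B)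

/-- `𝕋` applied to a plain function `𝔸(R) → A`. -/
def TmapF {A : Type} [CommRing A] (R : IgrData) (g : Colim R → A) :
    ∀ n, (TColim R).C n → (TData A).C n
  | 0 => fun x => (x : ZMod 2)
  | _+1 => fun q => (g (q : Colim R) : A)

/-- The induced map on colimits `𝔸(f) : 𝔸(R) → 𝔸(S)`. -/
noncomputable def cmap {R S : IgrData} (f : ∀ n, R.C n → S.C n) (q : Colim R) : Colim S :=
  Quot.mk _ ⟨q.out.1, f q.out.1 q.out.2⟩

end IgrData
end IgrPaper

namespace IgrPaper
open IgrData

section Aux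
variable (R : IgrData)

/-- Total space of the graded carriers. -/
abbrev Tot : Type := Σ n, R.C n

/-- Total multiplication. -/
def M (p q : Tot R) : Tot R := ⟨p.1 + q.1, R.mul p.2 q.2⟩

variable {R}

lemma mkEq {n m : ℕ} (h : n = m) {x : R.C n} {y : R.C m} (h2 : HEq x y) :
    (⟨n, x⟩ : Tot R) = ⟨m, y⟩ := by
  subst h; exact congrArg _ (eq_of_heq h2)

lemma sndEq {n : ℕ} {x y : R.C n} (h : (⟨n, x⟩ : Tot R) = ⟨n, y⟩) : x = y := by
  simpa using h

variable (hR : R.IsIgr)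
include hR

lemma Massoc (a b c : Tot R) : M R (M R a b) c = M R a (M R b c) :=
  mkEq (Nat.add_assoc _ _ _) (hR.mul_assoc _ _ _)

lemma Mcomm (a b : Tot R) : M R a b = M R b a :=
  mkEq (Nat.add_comm _ _) (hR.mul_comm _ _)

lemma Mmmc (a b c d : Tot R) :
    M R (M R a b) (M R c d) = M R (M R a c) (M R b d) := by
  rw [Massoc hR, ← Massoc hR b c d, Mcomm hR b c, Massoc hR c b d, ← Massoc hR]

lemma mul_zero' {n m : ℕ} (x : R.C n) : R.mul x (R.zero m) = R.zero (n + m) := by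
  have h1 : R.mul x (R.zero m) = R.add (R.mul x (R.zero m)) (R.mul x (R.zero m)) := by
    conv_lhs => rw [← hR.add_zero (R.zero m), hR.mul_add]
  rw [h1, hR.add_self]

lemma zero_mul' {n m : ℕ} (x : R.C m) : R.mul (R.zero n) x = R.zero (n + m) := by
  have h1 : R.mul (R.zero n) x = R.add (R.mul (R.zero n) x) (R.mul (R.zero n) x) := by
    conv_lhs => rw [← hR.add_zero (R.zero n), hR.add_mul]
  rw [h1, hR.add_self]

/-- Key lemma: `x * x = ⊤ₙ * x` for pure products. -/
lemma sq_pure (hh : HCond R) : ∀ {n : ℕ} {x : R.C n}, Pure1 R n x →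
    R.mul x x = R.mul (R.top n) x := by
  intro n x hx
  induction hx with
  | base a => exact hh a
  | @step n x a _ ih =>
    apply sndEq (R := R)
    have e1 : (⟨n + 1, R.mul x a⟩ : Tot R) = M R ⟨n, x⟩ ⟨1, a⟩ := rfl
    calc (⟨(n+1)+(n+1), R.mul (R.mul x a) (R.mul x a)⟩ : Tot R)
        = M R (M R ⟨n, x⟩ ⟨1, a⟩) (M R ⟨n, x⟩ ⟨1, a⟩) := rfl
      _ = M R (M R ⟨n, x⟩ ⟨n, x⟩) (M R ⟨1, a⟩ ⟨1, a⟩) := Mmmc hR _ _ _ _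
      _ = M R (M R ⟨n, R.top n⟩ ⟨n, x⟩) (M R ⟨1, R.top 1⟩ ⟨1, a⟩) := by
          show M R ⟨n+n, R.mul x x⟩ ⟨1+1, R.mul a a⟩ = _
          rw [ih, hh a]; rfl
      _ = M R (M R ⟨n, R.top n⟩ ⟨1, R.top 1⟩) (M R ⟨n, x⟩ ⟨1, a⟩) := Mmmc hR _ _ _ _
      _ = M R ⟨n + 1, R.top (n + 1)⟩ (M R ⟨n, x⟩ ⟨1, a⟩) := by
          rw [show M R ⟨n, R.top n⟩ ⟨1, R.top 1⟩ = ⟨n + 1, R.top (n + 1)⟩ from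
            congrArg (Sigma.mk (n + 1)) (hR.top_mul_top n 1)]
      _ = ⟨(n+1)+(n+1), R.mul (R.top (n+1)) (R.mul x a)⟩ := rfl

/-- Key lemma: `x * x = ⊤ₙ * x` for all `x`. -/
lemma sq (hgen : GeneratedAt1 R) (hh : HCond R) :
    ∀ {n : ℕ} (x : R.C n), R.mul x x = R.mul (R.top n) x := by
  intro n x
  match n with
  | 0 =>
    rcases hR.level0 x with h | h <;> subst h
    · rw [mul_zero' hR, mul_zero' hR]
    · rfl
  | Nat.succ k =>
    have g : Gen1 R (k + 1) x := hgen (k + 1) (Nat.succ_le_succ (Nat.zero_le k)) x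
    clear hgen
    induction g with
    | pure x hx => exact sq_pure hR hh hx
    | zero => rw [zero_mul' hR, mul_zero' hR]
    | add x y _ _ ihx ihy =>
      have hxy : R.mul x y = R.mul y x := eq_of_heq (hR.mul_comm x y)
      rw [hR.mul_add, hR.add_mul, hR.add_mul, ihx, ihy, hR.mul_add, hR.add_assoc]
      congr 1
      rw [hxy, ← hR.add_assoc, hR.add_self, hR.add_comm, hR.add_zero]

/-- `hIter` agrees with multiplication by tops, in the total space. -/
lemma hIter_eq : ∀ (k : ℕ) {n : ℕ} (x : R.C n),
    (⟨n + k, R.hIter k x⟩ : Tot R) = ⟨k + n, R.mul (R.top k) x⟩ := by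
  intro k
  induction k with
  | zero =>
    intro n x
    refine mkEq (Nat.add_comm 0 n).symm ?_
    have h := hR.mul_comm x (R.top 0)
    rw [hR.mul_top0 x] at h
    exact h
  | succ k ih =>
    intro n x
    have e1 : (⟨n + (k + 1), R.hIter (k + 1) x⟩ : Tot R)
        = ⟨1 + (n + k), R.mul (R.top 1) (R.hIter k x)⟩ := by
      exact mkEq (Nat.add_comm (n + k) 1) (cast_heq _ _)
    rw [e1]
    have e2 : (⟨1 + (n + k), R.mul (R.top 1) (R.hIter k x)⟩ : Tot R)
        = M R ⟨1, R.top 1⟩ ⟨n + k, R.hIter k x⟩ := rfl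
    rw [e2, ih x]
    have e3 : (⟨k + n, R.mul (R.top k) x⟩ : Tot R) = M R ⟨k, R.top k⟩ ⟨n, x⟩ := rfl
    rw [e3, ← Massoc hR]
    rw [show M R ⟨1, R.top 1⟩ ⟨k, R.top k⟩ = ⟨k + 1, R.top (k + 1)⟩ from
      (congrArg (Sigma.mk (1 + k)) (hR.top_mul_top 1 k)).trans
        (mkEq (Nat.add_comm 1 k) (Nat.add_comm 1 k ▸ HEq.rfl))]
    rfl

omit hR

/-- In the colimit, `hIter` collapses. -/
lemma cmk_hIter : ∀ (k : ℕ) {n : ℕ} (x : R.C n),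
    Quot.mk (colimRel R) ⟨n + k, R.hIter k x⟩ = Quot.mk (colimRel R) ⟨n, x⟩ := by
  intro k
  induction k with
  | zero => intro n x; rfl
  | succ k ih =>
    intro n x
    have : Quot.mk (colimRel R) ⟨n + k, R.hIter k x⟩
        = Quot.mk (colimRel R) ⟨n + k + 1, R.h (R.hIter k x)⟩ :=
      Quot.sound rfl
    exact this.symm.trans (ih x)

end Aux

/-- For `R ∈ Igr₊`, the colimit ring `𝔸(R) = colimₙ Rₙ` is boolean:
every element is idempotent. -/
theorem stmt13 (R : IgrData) (hR : R.IsIgr) (hgen : GeneratedAt1 R) (hh : HCond R) :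
    ∀ q : Colim R, R.cmul q q = q := by
  intro q
  show Quot.mk (colimRel R) ⟨q.out.1 + q.out.1, R.mul q.out.2 q.out.2⟩ = q
  rw [sq hR hgen hh q.out.2]
  have e : (⟨q.out.1 + q.out.1, R.mul (R.top q.out.1) q.out.2⟩ : Tot R)
      = ⟨q.out.1 + q.out.1, R.hIter q.out.1 q.out.2⟩ := (hIter_eq hR q.out.1 q.out.2).symm
  rw [show Quot.mk (colimRel R) ⟨q.out.1 + q.out.1, R.mul (R.top q.out.1) q.out.2⟩
      = Quot.mk (colimRel R) ⟨q.out.1 + q.out.1, R.hIter q.out.1 q.out.2⟩ from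
    congrArg (Quot.mk (colimRel R)) e]
  rw [cmk_hIter q.out.1 q.out.2]
  exact q.out_eq

end IgrPaper
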